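/- Let L ∈ ℂ^{N×N} be a complex matrix such that for every nonzero U ∈ ℂ^N and every index i with |U_i| = max_{1≤j≤N} |U_j|, one has Re( conj(U_i)·(LU)_i ) ≤ 0. Then for every t ≥ 0 and every U ∈ ℂ^N, ‖exp(tL)·U‖_∞ ≤ ‖U‖_∞. -/

import Mathlib

open NormedSpace
open scoped Nat

section ExpBounds

variable {𝔸 : Type*} [NormedRing 𝔸] [NormedAlgebra ℂ 𝔸] [CompleteSpace 𝔸]

private lemma real_exp_eq_tsum (r : ℝ) : Real.exp r = ∑' n : ℕ, r ^ n / n ! := by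
  rw [Real.exp_eq_exp_ℝ, NormedSpace.exp_eq_tsum_div]

set_option maxHeartbeats 1000000 in
private lemma aux_exp_sub_one_sub (x : 𝔸) :
    ‖NormedSpace.exp x - 1 - x‖ ≤ ‖x‖ ^ 2 * Real.exp ‖x‖ := by
  set f : ℕ → 𝔸 := fun n => (n !⁻¹ : ℂ) • x ^ n with hf
  have hs : Summable f := expSeries_summable' x
  have hs1 : Summable fun n => f (n + 1) := (summable_nat_add_iff 1).mpr hs
  have hs2 : Summable fun n => f (n + 2) := (summable_nat_add_iff 2).mpr hs
  have hns : Summable fun n : ℕ => ‖(n !⁻¹ : ℂ) • x ^ n‖ := norm_expSeries_summable' x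
  have hs1n : Summable fun n => ‖f (n + 1)‖ := (summable_nat_add_iff 1).mpr hns
  have hs2n : Summable fun n => ‖f (n + 2)‖ := (summable_nat_add_iff 2).mpr hns
  have hexp : NormedSpace.exp x = ∑' n, f n := by rw [exp_eq_tsum ℂ]
  have h0 : (∑' n, f n) = f 0 + ∑' n, f (n + 1) := Summable.tsum_eq_zero_add hs
  have h1 : (∑' n, f (n + 1)) = f 1 + ∑' n, f (n + 2) := Summable.tsum_eq_zero_add hs1
  have hf0 : f 0 = 1 := by simp [hf]
  have hf1 : f 1 = x := by simp [hf]
  have key : NormedSpace.exp x - 1 - x = ∑' n, f (n + 2) := by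
    rw [hexp, h0, h1, hf0, hf1]; abel
  rw [key]
  have hterm : ∀ n : ℕ, ‖f (n + 2)‖ ≤ ‖x‖ ^ 2 * (‖x‖ ^ n / n !) := by
    intro n
    have h1 : ‖f (n + 2)‖ = ((n + 2)! : ℝ)⁻¹ * ‖x ^ (n + 2)‖ := by
      simp [hf, norm_smul]
    have h2 : ‖x ^ (n + 2)‖ ≤ ‖x‖ ^ (n + 2) := norm_pow_le' x (by omega)
    have h3 : ((n ! : ℝ)) ≤ ((n + 2)! : ℝ) := by
      exact_mod_cast Nat.factorial_le (by omega)
    have h4 : (0:ℝ) < (n ! : ℝ) := by exact_mod_cast Nat.factorial_pos n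
    have h5 : (0:ℝ) < ((n + 2)! : ℝ) := by exact_mod_cast Nat.factorial_pos (n + 2)
    rw [h1]
    have h6 : ((n + 2)! : ℝ)⁻¹ * ‖x ^ (n + 2)‖ ≤ ((n ! : ℝ))⁻¹ * ‖x‖ ^ (n + 2) := by
      apply mul_le_mul (by exact inv_anti₀ h4 h3) h2 (norm_nonneg _)
        (by positivity)
    refine h6.trans (le_of_eq ?_)
    rw [pow_add, div_eq_mul_inv]
    ring
  have hsum_g : Summable fun n : ℕ => ‖x‖ ^ 2 * (‖x‖ ^ n / n !) :=
    (Real.summable_pow_div_factorial ‖x‖).mul_left _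
  calc ‖∑' n, f (n + 2)‖ ≤ ∑' n, ‖f (n + 2)‖ := norm_tsum_le_tsum_norm hs2n
    _ ≤ ∑' n : ℕ, ‖x‖ ^ 2 * (‖x‖ ^ n / n !) := Summable.tsum_le_tsum hterm hs2n hsum_g
    _ = ‖x‖ ^ 2 * ∑' n : ℕ, ‖x‖ ^ n / n ! := tsum_mul_left
    _ = ‖x‖ ^ 2 * Real.exp ‖x‖ := by rw [real_exp_eq_tsum]

private lemma aux_exp_sub_one (x : 𝔸) :
    ‖NormedSpace.exp x - 1‖ ≤ ‖x‖ * Real.exp ‖x‖ := by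
  set f : ℕ → 𝔸 := fun n => (n !⁻¹ : ℂ) • x ^ n with hf
  have hs : Summable f := expSeries_summable' x
  have hs1 : Summable fun n => f (n + 1) := (summable_nat_add_iff 1).mpr hs
  have hns : Summable fun n : ℕ => ‖(n !⁻¹ : ℂ) • x ^ n‖ := norm_expSeries_summable' x
  have hs1n : Summable fun n => ‖f (n + 1)‖ := (summable_nat_add_iff 1).mpr hns
  have hexp : NormedSpace.exp x = ∑' n, f n := by rw [exp_eq_tsum ℂ]
  have h0 : (∑' n, f n) = f 0 + ∑' n, f (n + 1) := Summable.tsum_eq_zero_add hs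
  have hf0 : f 0 = 1 := by simp [hf]
  have key : NormedSpace.exp x - 1 = ∑' n, f (n + 1) := by
    rw [hexp, h0, hf0]; abel
  rw [key]
  have hterm : ∀ n : ℕ, ‖f (n + 1)‖ ≤ ‖x‖ * (‖x‖ ^ n / n !) := by
    intro n
    have h1 : ‖f (n + 1)‖ = ((n + 1)! : ℝ)⁻¹ * ‖x ^ (n + 1)‖ := by
      simp [hf, norm_smul]
    have h2 : ‖x ^ (n + 1)‖ ≤ ‖x‖ ^ (n + 1) := norm_pow_le' x (by omega)
    have h3 : ((n ! : ℝ)) ≤ ((n + 1)! : ℝ) := by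
      exact_mod_cast Nat.factorial_le (by omega)
    have h4 : (0:ℝ) < (n ! : ℝ) := by exact_mod_cast Nat.factorial_pos n
    rw [h1]
    have h6 : ((n + 1)! : ℝ)⁻¹ * ‖x ^ (n + 1)‖ ≤ ((n ! : ℝ))⁻¹ * ‖x‖ ^ (n + 1) := by
      apply mul_le_mul (by exact inv_anti₀ h4 h3) h2 (norm_nonneg _)
        (by positivity)
    refine h6.trans ?_
    rw [pow_succ, div_eq_mul_inv]
    exact le_of_eq (by ring)
  have hsum_g : Summable fun n : ℕ => ‖x‖ * (‖x‖ ^ n / n !) :=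
    (Real.summable_pow_div_factorial ‖x‖).mul_left _
  calc ‖∑' n, f (n + 1)‖ ≤ ∑' n, ‖f (n + 1)‖ := norm_tsum_le_tsum_norm hs1n
    _ ≤ ∑' n : ℕ, ‖x‖ * (‖x‖ ^ n / n !) := Summable.tsum_le_tsum hterm hs1n hsum_g
    _ = ‖x‖ * ∑' n : ℕ, ‖x‖ ^ n / n ! := tsum_mul_left
    _ = ‖x‖ * Real.exp ‖x‖ := by rw [real_exp_eq_tsum]

private lemma aux_one_sub_mul_exp (x : 𝔸) :
    ‖(1 - x) * NormedSpace.exp x - 1‖ ≤ 2 * ‖x‖ ^ 2 * Real.exp ‖x‖ := by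
  have hid : (1 - x) * NormedSpace.exp x - 1 = (NormedSpace.exp x - 1 - x) - x * (NormedSpace.exp x - 1) := by
    noncomm_ring
  rw [hid]
  have h1 := aux_exp_sub_one_sub x
  have h2 : ‖x * (NormedSpace.exp x - 1)‖ ≤ ‖x‖ * (‖x‖ * Real.exp ‖x‖) :=
    (norm_mul_le _ _).trans (by
      exact mul_le_mul_of_nonneg_left (aux_exp_sub_one x) (norm_nonneg x))
  calc ‖(NormedSpace.exp x - 1 - x) - x * (NormedSpace.exp x - 1)‖
      ≤ ‖NormedSpace.exp x - 1 - x‖ + ‖x * (NormedSpace.exp x - 1)‖ := norm_sub_le _ _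
    _ ≤ ‖x‖ ^ 2 * Real.exp ‖x‖ + ‖x‖ * (‖x‖ * Real.exp ‖x‖) := add_le_add h1 h2
    _ = 2 * ‖x‖ ^ 2 * Real.exp ‖x‖ := by ring

end ExpBounds

section MatrixPart

attribute [local instance] Matrix.linftyOpSemiNormedRing Matrix.linftyOpNormedRing
  Matrix.linftyOpNormedAlgebra

private lemma complex_abs_le_of_re_nonpos {a b : ℂ} (h : ((starRingEnd ℂ) a * b).re ≤ 0) :
    ‖a‖ ≤ ‖a - b‖ := by
  have hre : a.re * b.re + a.im * b.im ≤ 0 := by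
    simpa [Complex.mul_re, Complex.conj_re, Complex.conj_im] using h
  rw [Complex.norm_def, Complex.norm_def]
  apply Real.sqrt_le_sqrt
  simp only [Complex.normSq_apply, Complex.sub_re, Complex.sub_im]
  nlinarith [sq_nonneg b.re, sq_nonneg b.im]

private lemma key_vec_step (N : ℕ) (L : Matrix (Fin N) (Fin N) ℂ)
    (hL : ∀ U : Fin N → ℂ, U ≠ 0 → ∀ i : Fin N,
      (∀ j : Fin N, ‖U j‖ ≤ ‖U i‖) →
        ((starRingEnd ℂ) (U i) * L.mulVec U i).re ≤ 0)
    (h : ℝ) (hh : 0 ≤ h) (V : Fin N → ℂ) :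
    ‖V‖ ≤ ‖(1 - (h : ℂ) • L).mulVec V‖ := by
  rcases eq_or_ne V 0 with rfl | hV
  · simp
  haveI : Nonempty (Fin N) := by
    rcases isEmpty_or_nonempty (Fin N) with hE | hNE
    · exact absurd (Subsingleton.elim V 0) hV
    · exact hNE
  obtain ⟨i, hi⟩ := Finite.exists_max fun j => ‖V j‖
  have hre := hL V hV i hi
  have hre' : ((starRingEnd ℂ) (V i) * ((h : ℂ) * L.mulVec V i)).re ≤ 0 := by
    have : ((starRingEnd ℂ) (V i) * ((h : ℂ) * L.mulVec V i)) =
        (h : ℂ) * ((starRingEnd ℂ) (V i) * L.mulVec V i) := by ring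
    rw [this]
    simp only [Complex.re_ofReal_mul]
    exact mul_nonpos_of_nonneg_of_nonpos hh hre
  have hcomp : (1 - (h : ℂ) • L).mulVec V i = V i - (h : ℂ) * L.mulVec V i := by
    rw [Matrix.sub_mulVec]
    simp [Matrix.one_mulVec, Matrix.smul_mulVec]
  have h1 : ‖V‖ ≤ ‖V i‖ := by
    rw [pi_norm_le_iff_of_nonneg (norm_nonneg _)]
    intro j
    simpa using hi j
  have h2 : ‖V i‖ ≤ ‖(1 - (h : ℂ) • L).mulVec V i‖ := by
    rw [hcomp]
    exact complex_abs_le_of_re_nonpos hre'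
  have h3 : ‖(1 - (h : ℂ) • L).mulVec V i‖ ≤ ‖(1 - (h : ℂ) • L).mulVec V‖ := by
    simpa using norm_le_pi_norm ((1 - (h : ℂ) • L).mulVec V) i
  exact h1.trans (h2.trans h3)

private lemma key_vec_iter (N : ℕ) (L : Matrix (Fin N) (Fin N) ℂ)
    (hL : ∀ U : Fin N → ℂ, U ≠ 0 → ∀ i : Fin N,
      (∀ j : Fin N, ‖U j‖ ≤ ‖U i‖) →
        ((starRingEnd ℂ) (U i) * L.mulVec U i).re ≤ 0)
    (h : ℝ) (hh : 0 ≤ h) (n : ℕ) (V : Fin N → ℂ) :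
    ‖V‖ ≤ ‖((1 - (h : ℂ) • L) ^ n).mulVec V‖ := by
  induction n with
  | zero => simp
  | succ n ih =>
    calc ‖V‖ ≤ ‖((1 - (h : ℂ) • L) ^ n).mulVec V‖ := ih
      _ ≤ ‖(1 - (h : ℂ) • L).mulVec (((1 - (h : ℂ) • L) ^ n).mulVec V)‖ :=
          key_vec_step N L hL h hh _
      _ = ‖((1 - (h : ℂ) • L) ^ (n + 1)).mulVec V‖ := by
          rw [Matrix.mulVec_mulVec, ← pow_succ']

end MatrixPart

theorem exp_contraction_sup_norm (N : ℕ) (L : Matrix (Fin N) (Fin N) ℂ)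
    (hL : ∀ U : Fin N → ℂ, U ≠ 0 → ∀ i : Fin N,
      (∀ j : Fin N, ‖U j‖ ≤ ‖U i‖) →
        ((starRingEnd ℂ) (U i) * L.mulVec U i).re ≤ 0) :
    ∀ t : ℝ, 0 ≤ t → ∀ U : Fin N → ℂ,
      (⨆ i : Fin N, ‖(NormedSpace.exp ((t : ℂ) • L)).mulVec U i‖) ≤
        ⨆ i : Fin N, ‖U i‖ := by
  letI : SeminormedRing (Matrix (Fin N) (Fin N) ℂ) := Matrix.linftyOpSemiNormedRing
  letI : NormedRing (Matrix (Fin N) (Fin N) ℂ) := Matrix.linftyOpNormedRing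
  letI : NormedAlgebra ℂ (Matrix (Fin N) (Fin N) ℂ) := Matrix.linftyOpNormedAlgebra
  intro t ht U
  rcases Nat.eq_zero_or_pos N with rfl | hN
  · simp [Real.iSup_of_isEmpty]
  haveI : Nonempty (Fin N) := ⟨⟨0, hN⟩⟩
  have hsup : ∀ V : Fin N → ℂ, (⨆ i : Fin N, ‖V i‖) = ‖V‖ := by
    intro V
    apply le_antisymm
    · apply ciSup_le
      intro i
      simpa using norm_le_pi_norm V i
    · rw [pi_norm_le_iff_of_nonneg (Real.iSup_nonneg fun i => norm_nonneg _)]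
      intro i
      exact le_ciSup (f := fun j : Fin N => ‖V j‖) (Set.Finite.bddAbove (Set.finite_range _)) i
  rw [hsup, hsup]
  have hone : ‖(1 : Matrix (Fin N) (Fin N) ℂ)‖ = 1 := by
    rw [← Matrix.diagonal_one, Matrix.linfty_opNorm_diagonal]
    exact norm_one
  set C : ℝ := 2 * (t * ‖L‖) ^ 2 * Real.exp (t * ‖L‖) with hC
  have hC0 : 0 ≤ C := by positivity
  have main : ∀ n : ℕ, 1 ≤ n →
      ‖(NormedSpace.exp ((t : ℂ) • L)).mulVec U‖ ≤ Real.exp (C / n) * ‖U‖ := by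
    intro n hn
    have hn0 : (0:ℝ) < n := by exact_mod_cast hn
    set h : ℝ := t / n with hdef
    have hh : 0 ≤ h := div_nonneg ht hn0.le
    set x : Matrix (Fin N) (Fin N) ℂ := (h : ℂ) • L with hx
    set M : Matrix (Fin N) (Fin N) ℂ := 1 - x with hM
    have hnh : (n : ℝ) * h = t := by
      rw [hdef]; field_simp
    have hnx : (n : ℂ) • x = (t : ℂ) • L := by
      rw [hx, smul_smul]
      congr 1
      calc (n : ℂ) * (h : ℂ) = ((n * h : ℝ) : ℂ) := by push_cast; ring
        _ = (t : ℂ) := by rw [hnh]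
    have hexp_pow : NormedSpace.exp ((t : ℂ) • L) = (NormedSpace.exp x) ^ n := by
      rw [← hnx, Nat.cast_smul_eq_nsmul ℂ n x]
      exact Matrix.exp_nsmul n x
    have hcomm : Commute M (NormedSpace.exp x) :=
      (((Commute.one_left x).sub_left (Commute.refl x)).exp_right)
    have hMpow : (M ^ n) * NormedSpace.exp ((t : ℂ) • L) =
        (M * NormedSpace.exp x) ^ n := by
      rw [hexp_pow, hcomm.mul_pow]
    have hnormx : ‖x‖ = h * ‖L‖ := by
      rw [hx, norm_smul, Complex.norm_real, Real.norm_eq_abs, abs_of_nonneg hh]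
    have hxle : ‖x‖ ≤ t * ‖L‖ := by
      rw [hnormx, hdef]
      have hL0 : (0:ℝ) ≤ ‖L‖ := norm_nonneg _
      have : t / n ≤ t := by
        apply div_le_self ht
        exact_mod_cast hn
      nlinarith
    have hstep : ‖M * NormedSpace.exp x‖ ≤ 1 + C / n ^ 2 := by
      have h1 : ‖M * NormedSpace.exp x - 1‖ ≤ 2 * ‖x‖ ^ 2 * Real.exp ‖x‖ := by
        rw [hM]
        exact aux_one_sub_mul_exp x
      have h3 : 2 * ‖x‖ ^ 2 * Real.exp ‖x‖ ≤ C / n ^ 2 := by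
        have hx2 : ‖x‖ ^ 2 * (n:ℝ) ^ 2 = (t * ‖L‖) ^ 2 := by
          rw [hnormx, hdef]
          field_simp
        have hexple : Real.exp ‖x‖ ≤ Real.exp (t * ‖L‖) := Real.exp_le_exp.mpr hxle
        rw [hC, le_div_iff₀ (by positivity)]
        nlinarith [Real.exp_pos ‖x‖, sq_nonneg (t * ‖L‖)]
      calc ‖M * NormedSpace.exp x‖
          ≤ ‖M * NormedSpace.exp x - 1‖ + ‖(1 : Matrix (Fin N) (Fin N) ℂ)‖ := by
            simpa using norm_add_le (M * NormedSpace.exp x - 1) 1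
        _ = ‖M * NormedSpace.exp x - 1‖ + 1 := by rw [hone]
        _ ≤ 2 * ‖x‖ ^ 2 * Real.exp ‖x‖ + 1 := by linarith
        _ ≤ 1 + C / n ^ 2 := by linarith
    calc ‖(NormedSpace.exp ((t : ℂ) • L)).mulVec U‖
        ≤ ‖(M ^ n).mulVec ((NormedSpace.exp ((t : ℂ) • L)).mulVec U)‖ := by
          rw [hM]
          exact key_vec_iter N L hL h hh n _
      _ = ‖((M ^ n) * NormedSpace.exp ((t : ℂ) • L)).mulVec U‖ := by
          rw [Matrix.mulVec_mulVec]
      _ = ‖((M * NormedSpace.exp x) ^ n).mulVec U‖ := by rw [hMpow]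
      _ ≤ ‖(M * NormedSpace.exp x) ^ n‖ * ‖U‖ := Matrix.linfty_opNorm_mulVec _ _
      _ ≤ ‖M * NormedSpace.exp x‖ ^ n * ‖U‖ := by
          apply mul_le_mul_of_nonneg_right _ (norm_nonneg _)
          exact norm_pow_le' _ (by omega)
      _ ≤ (1 + C / n ^ 2) ^ n * ‖U‖ := by
          apply mul_le_mul_of_nonneg_right _ (norm_nonneg _)
          exact pow_le_pow_left₀ (norm_nonneg _) hstep n
      _ ≤ Real.exp (C / n ^ 2) ^ n * ‖U‖ := by
          apply mul_le_mul_of_nonneg_right _ (norm_nonneg _)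
          apply pow_le_pow_left₀ (by positivity)
          linarith [Real.add_one_le_exp (C / n ^ 2)]
      _ = Real.exp (C / n) * ‖U‖ := by
          rw [← Real.exp_nat_mul]
          congr 2
          field_simp
  have hlim : Filter.Tendsto (fun n : ℕ => Real.exp (C / n) * ‖U‖) Filter.atTop
      (nhds (Real.exp 0 * ‖U‖)) := by
    apply Filter.Tendsto.mul _ tendsto_const_nhds
    exact (Real.continuous_exp.tendsto 0).comp (tendsto_const_div_atTop_nhds_zero_nat C)
  have := ge_of_tendsto hlim (Filter.eventually_atTop.mpr ⟨1, fun n hn => main n hn⟩)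
  simpa using this
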